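/- Let Γ be a finitely generated group, μ a finitely supported symmetric generating probability measure on Γ, and Δ_μ the associated Laplacian element. If ξ ∈ Σ²I[Γ] and δ > 0, then ξ + δΔ_μ is an algebraic interior point of Σ²I[Γ] inside the real vector space I[Γ]^her of hermitian elements of I[Γ]: for every hermitian η ∈ I[Γ] there exists t ∈ (0, 1] such that (1−t)(ξ + δΔ_μ) + tη ∈ Σ²I[Γ]. -/

import Mathlib

open MonoidAlgebra Finset RealInnerProductSpace

/-- The involution `ξ*(x) = ξ(x⁻¹)` on the real group algebra `ℝ[Γ]`. -/
def astar {Γ : Type*} [Group Γ] (ξ : MonoidAlgebra ℝ Γ) : MonoidAlgebra ℝ Γ :=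
  MonoidAlgebra.ofCoeff (Finsupp.equivMapDomain (Equiv.inv Γ) ξ.coeff)

/-- The augmentation character `ℝ[Γ] → ℝ`, `ξ ↦ Σ_x ξ(x)`. -/
noncomputable def aug (Γ : Type*) [Group Γ] : MonoidAlgebra ℝ Γ →ₐ[ℝ] ℝ :=
  MonoidAlgebra.lift ℝ ℝ Γ 1

/-- The augmentation ideal `I[Γ] = {ξ ∈ ℝ[Γ] : Σ_x ξ(x) = 0}`, as an `ℝ`-submodule. -/
noncomputable def augIdeal (Γ : Type*) [Group Γ] : Submodule ℝ (MonoidAlgebra ℝ Γ) :=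
  LinearMap.ker (aug Γ).toLinearMap

/-- `Σ²ℝ[Γ]`, the set of finite sums of hermitian squares in `ℝ[Γ]`. -/
def SOS (Γ : Type*) [Group Γ] : Set (MonoidAlgebra ℝ Γ) :=
  {ξ | ∃ (n : ℕ) (f : Fin n → MonoidAlgebra ℝ Γ), ξ = ∑ i, astar (f i) * f i}

/-- `Σ²I[Γ]`, the set of finite sums of hermitian squares of elements of `I[Γ]`. -/
def SOSI (Γ : Type*) [Group Γ] : Set (MonoidAlgebra ℝ Γ) :=
  {ξ | ∃ (n : ℕ) (f : Fin n → MonoidAlgebra ℝ Γ),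
    (∀ i, f i ∈ augIdeal Γ) ∧ ξ = ∑ i, astar (f i) * f i}

section Aux
variable {Γ : Type*} [Group Γ]

lemma astar_apply (ξ : MonoidAlgebra ℝ Γ) (x : Γ) : (astar ξ).coeff x = ξ.coeff x⁻¹ := rfl
lemma astar_single (x : Γ) (r : ℝ) : astar (single x r) = single x⁻¹ r := by
  simp [astar, ← MonoidAlgebra.ofCoeff_single, Finsupp.equivMapDomain_single]
lemma astar_add (a b : MonoidAlgebra ℝ Γ) : astar (a + b) = astar a + astar b := by
  ext y; simp [astar_apply]
lemma astar_sub (a b : MonoidAlgebra ℝ Γ) : astar (a - b) = astar a - astar b := by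
  ext y; simp [astar_apply]
lemma astar_smul (c : ℝ) (a : MonoidAlgebra ℝ Γ) : astar (c • a) = c • astar a := by
  ext y; simp [astar_apply]
lemma astar_one : astar (1 : MonoidAlgebra ℝ Γ) = 1 := by
  have : (1 : MonoidAlgebra ℝ Γ) = single 1 1 := rfl
  rw [this, astar_single, inv_one]
lemma aug_single (x : Γ) (r : ℝ) : aug Γ (single x r) = r := by
  simp [aug, MonoidAlgebra.lift_single]
lemma mem_augIdeal_iff (a : MonoidAlgebra ℝ Γ) : a ∈ augIdeal Γ ↔ aug Γ a = 0 := Iff.rfl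

lemma aug_eq_sum (a : MonoidAlgebra ℝ Γ) : aug Γ a = ∑ x ∈ a.coeff.support, a.coeff x := by
  conv_lhs => rw [← MonoidAlgebra.sum_coeff_single a]
  rw [Finsupp.sum, map_sum]
  exact Finset.sum_congr rfl fun x _ => aug_single x (a.coeff x)

-- SOSI cone lemmas
lemma sosI_zero : (0 : MonoidAlgebra ℝ Γ) ∈ SOSI Γ :=
  ⟨0, fun i => 0, fun i => i.elim0, by simp⟩

lemma sosI_add {a b : MonoidAlgebra ℝ Γ} (ha : a ∈ SOSI Γ) (hb : b ∈ SOSI Γ) :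
    a + b ∈ SOSI Γ := by
  obtain ⟨n, f, hf, rfl⟩ := ha
  obtain ⟨m, g, hg, rfl⟩ := hb
  refine ⟨n + m, Fin.append f g, ?_, ?_⟩
  · intro i
    refine Fin.addCases (fun j => ?_) (fun j => ?_) i
    · rw [Fin.append_left]; exact hf j
    · rw [Fin.append_right]; exact hg j
  · rw [Fin.sum_univ_add]
    simp

lemma sosI_smul {c : ℝ} (hc : 0 ≤ c) {a : MonoidAlgebra ℝ Γ} (ha : a ∈ SOSI Γ) :
    c • a ∈ SOSI Γ := by
  obtain ⟨n, f, hf, rfl⟩ := ha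
  refine ⟨n, fun i => Real.sqrt c • f i, fun i => Submodule.smul_mem _ _ (hf i), ?_⟩
  rw [Finset.smul_sum]
  refine Finset.sum_congr rfl fun i _ => ?_
  rw [astar_smul, smul_mul_assoc, mul_smul_comm, smul_smul, Real.mul_self_sqrt hc]

lemma sosI_sq {a : MonoidAlgebra ℝ Γ} (ha : a ∈ augIdeal Γ) : astar a * a ∈ SOSI Γ :=
  ⟨1, fun _ => a, fun _ => ha, by simp⟩

lemma sosI_sum {s : Finset ι} {f : ι → MonoidAlgebra ℝ Γ} (h : ∀ i ∈ s, f i ∈ SOSI Γ) :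
    ∑ i ∈ s, f i ∈ SOSI Γ := by
  classical
  induction s using Finset.induction with
  | empty => simpa using sosI_zero
  | insert _ _ hx ih =>
    rw [Finset.sum_insert hx]
    exact sosI_add (h _ (Finset.mem_insert_self _ _))
      (ih fun i hi => h i (Finset.mem_insert_of_mem hi))

noncomputable def ee (x : Γ) : MonoidAlgebra ℝ Γ := 1 - single x 1
noncomputable def qq (x : Γ) : MonoidAlgebra ℝ Γ := astar (ee x) * ee x

lemma ee_mem (x : Γ) : ee x ∈ augIdeal Γ := by
  simp [mem_augIdeal_iff, ee, map_sub, map_one, aug_single]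

lemma qq_eq (x : Γ) : qq x = 2 - single x 1 - single x⁻¹ 1 := by
  simp only [qq, ee, astar_sub, astar_one, astar_single]
  rw [sub_mul, mul_sub, mul_sub, one_mul, one_mul, mul_one, single_mul_single,
    inv_mul_cancel, mul_one, ← MonoidAlgebra.one_def]
  have : (2 : MonoidAlgebra ℝ Γ) = 1 + 1 := by norm_num
  rw [this]; abel

lemma qq_mem (x : Γ) : qq x ∈ SOSI Γ := sosI_sq (ee_mem x)

lemma qq_inv (x : Γ) : qq x⁻¹ = qq x := by
  rw [qq_eq, qq_eq, inv_inv]; abel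

section Mu
variable (μ : MonoidAlgebra ℝ Γ) (hpos : ∀ x : Γ, 0 ≤ μ.coeff x) (hsymm : ∀ x : Γ, μ.coeff x⁻¹ = μ.coeff x)
  (hprob : ∑ x ∈ μ.coeff.support, μ.coeff x = 1)

include hsymm in
lemma sum_inv_single : ∑ x ∈ μ.coeff.support, μ.coeff x • (single x⁻¹ 1 : MonoidAlgebra ℝ Γ)
    = ∑ x ∈ μ.coeff.support, μ.coeff x • (single x 1 : MonoidAlgebra ℝ Γ) := by
  refine Finset.sum_equiv (Equiv.inv Γ) (fun i => ?_) (fun i hi => ?_)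
  · simp only [Finsupp.mem_support_iff, Equiv.inv_apply]
    rw [hsymm]
  · simp only [Equiv.inv_apply]
    rw [hsymm]

lemma sum_single_eq : ∑ x ∈ μ.coeff.support, μ.coeff x • (single x 1 : MonoidAlgebra ℝ Γ) = μ := by
  conv_rhs => rw [← MonoidAlgebra.sum_coeff_single μ]
  rw [Finsupp.sum]
  exact Finset.sum_congr rfl fun x _ => by rw [MonoidAlgebra.smul_single', mul_one]

include hsymm hprob in
lemma sum_qq_eq : ∑ x ∈ μ.coeff.support, μ.coeff x • qq x = (2:ℝ) • ((1 : MonoidAlgebra ℝ Γ) - μ) := by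
  simp only [qq_eq, smul_sub]
  rw [Finset.sum_sub_distrib, Finset.sum_sub_distrib, sum_inv_single μ hsymm,
    sum_single_eq, ← Finset.sum_smul, hprob, one_smul, two_smul, two_smul]
  have h2 : (2 : MonoidAlgebra ℝ Γ) = 1 + 1 := by norm_num
  rw [h2]; abel

include hpos hsymm hprob in
lemma delta_mem : (1 : MonoidAlgebra ℝ Γ) - μ ∈ SOSI Γ := by
  have h : ((1:ℝ)/2) • ((2:ℝ) • ((1 : MonoidAlgebra ℝ Γ) - μ)) = 1 - μ := by
    rw [smul_smul]; norm_num
  rw [← h, ← sum_qq_eq μ hsymm hprob]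
  exact sosI_smul (by norm_num)
    (sosI_sum fun x _ => sosI_smul (hpos x) (qq_mem x))

end Mu

lemma parallelogram (a b : MonoidAlgebra ℝ Γ) :
    astar (a + b) * (a + b) + astar (a - b) * (a - b)
      = (2:ℝ) • (astar a * a) + (2:ℝ) • (astar b * b) := by
  rw [astar_add, astar_sub, two_smul, two_smul]
  noncomm_ring

lemma qq_mul_le (x y : Γ) :
    (2:ℝ) • qq x + (2:ℝ) • qq y - qq (x*y) ∈ SOSI Γ := by
  set b : MonoidAlgebra ℝ Γ := 1 - single x 1 with hbdef
  set c : MonoidAlgebra ℝ Γ := single x 1 - single (x*y) 1 with hcdef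
  have hbc : b + c = ee (x*y) := by rw [hbdef, hcdef, ee]; abel
  have hb : astar b * b = qq x := rfl
  have hc : astar c * c = qq y := by
    rw [hcdef, astar_sub, astar_single, astar_single]
    rw [sub_mul, mul_sub, mul_sub, single_mul_single, single_mul_single,
      single_mul_single, single_mul_single]
    have e1 : x⁻¹ * x = 1 := by group
    have e2 : x⁻¹ * (x*y) = y := by group
    have e3 : (x*y)⁻¹ * x = y⁻¹ := by group
    have e4 : (x*y)⁻¹ * (x*y) = 1 := by group
    have h2 : (2 : MonoidAlgebra ℝ Γ) = 1 + 1 := by norm_num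
    rw [e1, e2, e3, e4]
    simp only [mul_one]
    rw [qq_eq, ← MonoidAlgebra.one_def, h2]
    abel
  have hmemsub : b - c ∈ augIdeal Γ := by
    simp [mem_augIdeal_iff, hbdef, hcdef, map_sub, map_one, aug_single]
  have hsum : astar (b+c) * (b+c) = qq (x*y) := by rw [hbc]; rfl
  have key : (2:ℝ) • qq x + (2:ℝ) • qq y - qq (x*y) = astar (b-c) * (b-c) := by
    rw [← hb, ← hc, ← hsum, ← parallelogram]; abel
  rw [key]
  exact sosI_sq hmemsub

lemma qq_one : qq (1:Γ) = 0 := by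
  rw [qq_eq, inv_one, ← MonoidAlgebra.one_def]
  norm_num

section Mu2
variable (μ : MonoidAlgebra ℝ Γ) (hpos : ∀ x : Γ, 0 ≤ μ.coeff x) (hsymm : ∀ x : Γ, μ.coeff x⁻¹ = μ.coeff x)
  (hprob : ∑ x ∈ μ.coeff.support, μ.coeff x = 1)

include hpos hsymm hprob in
lemma qq_dominated (hgen : Subgroup.closure (μ.coeff.support : Set Γ) = ⊤) (x : Γ) :
    ∃ c : ℝ, 0 ≤ c ∧ c • ((1 : MonoidAlgebra ℝ Γ) - μ) - qq x ∈ SOSI Γ := by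
  classical
  have hx : x ∈ Subgroup.closure (μ.coeff.support : Set Γ) := hgen ▸ Subgroup.mem_top x
  induction hx using Subgroup.closure_induction with
  | mem y hy =>
    have hmem : y ∈ μ.coeff.support := hy
    have hμy : 0 < μ.coeff y := (hpos y).lt_of_ne (Ne.symm (Finsupp.mem_support_iff.mp hmem))
    refine ⟨2 / μ.coeff y, by positivity, ?_⟩
    have key : ∑ z ∈ μ.coeff.support.erase y, μ.coeff z • qq z
        = (2:ℝ) • ((1 : MonoidAlgebra ℝ Γ) - μ) - μ.coeff y • qq y := by
      rw [Finset.sum_erase_eq_sub hmem, sum_qq_eq μ hsymm hprob]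
    have heq : (2 / μ.coeff y) • ((1 : MonoidAlgebra ℝ Γ) - μ) - qq y
        = (1 / μ.coeff y) • ((2:ℝ) • ((1 : MonoidAlgebra ℝ Γ) - μ) - μ.coeff y • qq y) := by
      match_scalars <;> field_simp
    rw [heq, ← key]
    exact sosI_smul (by positivity) (sosI_sum fun z _ => sosI_smul (hpos z) (qq_mem z))
  | one =>
    refine ⟨0, le_refl 0, ?_⟩
    rw [qq_one, zero_smul, sub_zero]
    exact sosI_zero
  | mul y z hy hz ihy ihz =>
    obtain ⟨cy, hcy0, hcy⟩ := ihy
    obtain ⟨cz, hcz0, hcz⟩ := ihz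
    refine ⟨2*cy + 2*cz, by positivity, ?_⟩
    have h := sosI_add (sosI_add (sosI_smul (c := 2) (by norm_num) hcy)
      (sosI_smul (c := 2) (by norm_num) hcz)) (qq_mul_le y z)
    have heq : (2*cy + 2*cz) • ((1 : MonoidAlgebra ℝ Γ) - μ) - qq (y*z)
        = (2:ℝ) • (cy • ((1 : MonoidAlgebra ℝ Γ) - μ) - qq y)
          + (2:ℝ) • (cz • ((1 : MonoidAlgebra ℝ Γ) - μ) - qq z)
          + ((2:ℝ) • qq y + (2:ℝ) • qq z - qq (y*z)) := by
      module
    rw [heq]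
    exact h
  | inv y hy ihy =>
    obtain ⟨c, h0, h⟩ := ihy
    exact ⟨c, h0, by rwa [qq_inv]⟩

end Mu2

section Mu3
variable (μ : MonoidAlgebra ℝ Γ) (hpos : ∀ x : Γ, 0 ≤ μ.coeff x) (hsymm : ∀ x : Γ, μ.coeff x⁻¹ = μ.coeff x)
  (hprob : ∑ x ∈ μ.coeff.support, μ.coeff x = 1) (hgen : Subgroup.closure (μ.coeff.support : Set Γ) = ⊤)

include hpos hsymm hprob hgen in
lemma eta_plus (η : MonoidAlgebra ℝ Γ) (hη : η ∈ augIdeal Γ) (hherm : astar η = η) :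
    ∃ R : ℝ, 0 ≤ R ∧ R • ((1 : MonoidAlgebra ℝ Γ) - μ) + η ∈ SOSI Γ := by
  classical
  have hsum0 : ∑ x ∈ η.coeff.support, η.coeff x = 0 := by rw [← aug_eq_sum]; exact hη
  have hsymmη : ∀ x : Γ, η.coeff x⁻¹ = η.coeff x := fun x => by rw [← astar_apply, hherm]
  have hqsum : ∑ x ∈ η.coeff.support, η.coeff x • qq x = (-2 : ℝ) • η := by
    simp only [qq_eq, smul_sub]
    rw [Finset.sum_sub_distrib, Finset.sum_sub_distrib, sum_inv_single η hsymmη,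
      sum_single_eq, ← Finset.sum_smul, hsum0, zero_smul]
    module
  choose cfun hc0 hc using fun x => qq_dominated μ hpos hsymm hprob hgen x
  refine ⟨∑ x ∈ η.coeff.support, |η.coeff x| / 2 * cfun x,
    Finset.sum_nonneg fun x _ => by have := hc0 x; positivity, ?_⟩
  have hdecomp : (∑ x ∈ η.coeff.support, |η.coeff x| / 2 * cfun x) • ((1 : MonoidAlgebra ℝ Γ) - μ) + η
      = ∑ x ∈ η.coeff.support,
          ((|η.coeff x| / 2 * cfun x) • ((1 : MonoidAlgebra ℝ Γ) - μ) - (η.coeff x / 2) • qq x) := by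
    rw [Finset.sum_sub_distrib, ← Finset.sum_smul]
    have h3 : ∑ x ∈ η.coeff.support, (η.coeff x / 2) • qq x = -η := by
      have : ∑ x ∈ η.coeff.support, (η.coeff x / 2) • qq x
          = (1/2 : ℝ) • ∑ x ∈ η.coeff.support, η.coeff x • qq x := by
        rw [Finset.smul_sum]
        exact Finset.sum_congr rfl fun x _ => by rw [smul_smul]; ring_nf
      rw [this, hqsum, smul_smul]
      norm_num
    rw [h3, sub_neg_eq_add]
  rw [hdecomp]
  refine sosI_sum fun x _ => ?_
  have key : (|η.coeff x| / 2 * cfun x) • ((1 : MonoidAlgebra ℝ Γ) - μ) - (η.coeff x / 2) • qq x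
      = (|η.coeff x| / 2) • (cfun x • ((1 : MonoidAlgebra ℝ Γ) - μ) - qq x)
        + ((|η.coeff x| - η.coeff x) / 2) • qq x := by
    module
  rw [key]
  refine sosI_add (sosI_smul (by positivity) (hc x)) (sosI_smul ?_ (qq_mem x))
  have := le_abs_self (η.coeff x)
  linarith

end Mu3

end Aux

/-- `ξ + δΔ_μ` is an algebraic interior point of `Σ²I[Γ]` inside the
hermitian part of `I[Γ]`, for `ξ ∈ Σ²I[Γ]` and `δ > 0`. -/
theorem stmt19 {Γ : Type*} [Group Γ]
    (μ : MonoidAlgebra ℝ Γ) (hpos : ∀ x : Γ, 0 ≤ μ.coeff x) (hsymm : ∀ x : Γ, μ.coeff x⁻¹ = μ.coeff x)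
    (hprob : ∑ x ∈ μ.coeff.support, μ.coeff x = 1)
    (hgen : Subgroup.closure (μ.coeff.support : Set Γ) = ⊤)
    (ξ : MonoidAlgebra ℝ Γ) (hξ : ξ ∈ SOSI Γ) (δ : ℝ) (hδ : 0 < δ)
    (η : MonoidAlgebra ℝ Γ) (hη : η ∈ augIdeal Γ) (hηherm : astar η = η) :
    ∃ t : ℝ, t ∈ Set.Ioc (0 : ℝ) 1 ∧ (1 - t) • (ξ + δ • (1 - μ)) + t • η ∈ SOSI Γ := by
  obtain ⟨R, hR0, hR⟩ := eta_plus μ hpos hsymm hprob hgen η hη hηherm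
  have hD : 0 < δ + R + 1 := by linarith
  set t := δ / (δ + R + 1) with ht
  have ht0 : 0 < t := div_pos hδ hD
  have ht1 : t ≤ 1 := (div_le_one hD).mpr (by linarith)
  have hcoef : (1 - t) * δ - t * R = δ / (δ + R + 1) := by
    rw [ht]; field_simp; ring
  have hcoef0 : 0 ≤ (1 - t) * δ - t * R := by
    rw [hcoef]; positivity
  refine ⟨t, ⟨ht0, ht1⟩, ?_⟩
  have hkey : (1 - t) • (ξ + δ • ((1 : MonoidAlgebra ℝ Γ) - μ)) + t • η
      = (1 - t) • ξ + t • (R • ((1 : MonoidAlgebra ℝ Γ) - μ) + η)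
        + ((1 - t) * δ - t * R) • ((1 : MonoidAlgebra ℝ Γ) - μ) := by
    module
  rw [hkey]
  exact sosI_add (sosI_add (sosI_smul (by linarith) hξ) (sosI_smul ht0.le hR))
    (sosI_smul hcoef0 (delta_mem μ hpos hsymm hprob))
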